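/- The Bellman error ε_{k,i,t} := Σ_a π(a|O_{i,t-k+2}) Q^π_{i,t-k+2,t}(O_{i,t-k+2},a) − Q^π_{i,t-k+1,t}(O_{i,t-k+1},A_{i,t-k+1}) satisfies |ε_{k,i,t}| ≤ C·π_0^k uniformly in i and t, for some constant C depending only on the uniform bound c on r̃_k functions. -/
import Mathlib


open MeasureTheory

/-- The Bellman error
`ε_{k,i,t} = Σ_a π(a|O_{i,t-k+2}) Q^π_{i,t-k+2,t}(O_{i,t-k+2},a) − Q^π_{i,t-k+1,t}(O_{i,t-k+1},A_{i,t-k+1})`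
satisfies `|ε_{k,i,t}| ≤ C·π0^k` uniformly in `i` and `t`, for some constant `C`
depending only on the uniform bound `c` on the `r̃_k` functions. -/
theorem bellman_error_geometric_bound
    {O : Type*} [MeasurableSpace O] {A : Type*} [Fintype A] {I : Type*}
    (μ : Measure O)
    (πu πv π0 : ℝ) (hu : 0 ≤ πu) (hv : 0 ≤ πv) (h0 : 0 ≤ π0)
    (hsum : πu + πv + π0 = 1)
    (pu : I → O → ℝ) (pv : ℕ → O → ℝ) (pol : A → O → ℝ)
    (hpolnn : ∀ a o, 0 ≤ pol a o) (hpolsum : ∀ o, ∑ a, pol a o = 1)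
    (rt : ℕ → O → A → ℝ) (c : ℝ)
    (hc : ∀ k o a, |rt k o a| ≤ c)
    (θ : ℕ → I → ℝ) (lam : ℕ → ℕ → ℝ)
    (hθinc : ∀ k, 1 ≤ k → ∀ i, θ k i = θ (k - 1) i +
      πu * π0 ^ (k - 1) * ∫ o, (∑ a, pol a o * rt (k - 1) o a) * pu i o ∂μ)
    (hlaminc : ∀ k, 1 ≤ k → ∀ t, lam k t = lam (k - 1) t +
      πv * π0 ^ (k - 1) * ∫ o, (∑ a, pol a o * rt (k - 1) o a) * pv t o ∂μ)
    (hpunn : ∀ i o, 0 ≤ pu i o) (hpuint : ∀ i, ∫ o, pu i o ∂μ = 1)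
    (hpvnn : ∀ t o, 0 ≤ pv t o) (hpvint : ∀ t, ∫ o, pv t o ∂μ = 1)
    (hintu : ∀ k i, Integrable (fun o => (∑ a, pol a o * rt k o a) * pu i o) μ)
    (hintv : ∀ k t, Integrable (fun o => (∑ a, pol a o * rt k o a) * pv t o) μ)
    -- two-way decomposition of the Q-function: Q i (t-k+1) t (o,a) = π0^k r̃_k(o,a) + θ_{k,i} + λ_{k,t}
    (Q : I → ℕ → ℕ → O → A → ℝ)
    (hQ : ∀ k t, 1 ≤ k → k ≤ t → ∀ i o a,
      Q i (t - k + 1) t o a = π0 ^ k * rt k o a + θ k i + lam k t)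
    -- observed trajectories
    (Obs : I → ℕ → O) (Act : I → ℕ → A) :
    ∃ C : ℝ, ∀ k, 2 ≤ k → ∀ i t, k ≤ t →
      |(∑ a, pol a (Obs i (t - k + 2)) * Q i (t - k + 2) t (Obs i (t - k + 2)) a) -
        Q i (t - k + 1) t (Obs i (t - k + 1)) (Act i (t - k + 1))| ≤ C * π0 ^ k := by

  have hcabs : ∀ m o a, |rt m o a| ≤ |c| := fun m o a => (hc m o a).trans (le_abs_self c)
  have hS : ∀ m o, |∑ a, pol a o * rt m o a| ≤ |c| := by
    intro m o
    calc |∑ a, pol a o * rt m o a| ≤ ∑ a, |pol a o * rt m o a| :=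
          Finset.abs_sum_le_sum_abs _ _
      _ ≤ ∑ a, pol a o * |c| := Finset.sum_le_sum (fun a _ => by
          rw [abs_mul, abs_of_nonneg (hpolnn a o)]
          exact mul_le_mul_of_nonneg_left (hcabs m o a) (hpolnn a o))
      _ = |c| := by rw [← Finset.sum_mul, hpolsum o, one_mul]
  have hIu : ∀ m i, |∫ o, (∑ a, pol a o * rt m o a) * pu i o ∂μ| ≤ |c| := by
    intro m i
    have hpuI : Integrable (pu i) μ := integrable_of_integral_eq_one (hpuint i)
    calc |∫ o, (∑ a, pol a o * rt m o a) * pu i o ∂μ|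
        ≤ ∫ o, |(∑ a, pol a o * rt m o a) * pu i o| ∂μ := by
          have key := norm_integral_le_integral_norm (μ := μ)
            (fun o => (∑ a, pol a o * rt m o a) * pu i o)
          simpa only [Real.norm_eq_abs] using key
      _ ≤ ∫ o, |c| * pu i o ∂μ := by
          refine integral_mono (hintu m i).abs (hpuI.const_mul _) (fun o => ?_)
          rw [abs_mul, abs_of_nonneg (hpunn i o)]
          exact mul_le_mul_of_nonneg_right (hS m o) (hpunn i o)
      _ = |c| := by rw [integral_const_mul, hpuint i, mul_one]
  have hIv : ∀ m t, |∫ o, (∑ a, pol a o * rt m o a) * pv t o ∂μ| ≤ |c| := by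
    intro m t
    have hpvI : Integrable (pv t) μ := integrable_of_integral_eq_one (hpvint t)
    calc |∫ o, (∑ a, pol a o * rt m o a) * pv t o ∂μ|
        ≤ ∫ o, |(∑ a, pol a o * rt m o a) * pv t o| ∂μ := by
          have key := norm_integral_le_integral_norm (μ := μ)
            (fun o => (∑ a, pol a o * rt m o a) * pv t o)
          simpa only [Real.norm_eq_abs] using key
      _ ≤ ∫ o, |c| * pv t o ∂μ := by
          refine integral_mono (hintv m t).abs (hpvI.const_mul _) (fun o => ?_)
          rw [abs_mul, abs_of_nonneg (hpvnn t o)]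
          exact mul_le_mul_of_nonneg_right (hS m o) (hpvnn t o)
      _ = |c| := by rw [integral_const_mul, hpvint t, mul_one]
  refine ⟨(2 + πu + πv) * |c| * π0⁻¹, ?_⟩
  intro k hk i t ht
  set O1 := Obs i (t - k + 2)
  set O2 := Obs i (t - k + 1)
  set a2 := Act i (t - k + 1)
  have hQ2 : Q i (t - k + 1) t O2 a2 = π0 ^ k * rt k O2 a2 + θ k i + lam k t :=
    hQ k t (by omega) ht i O2 a2
  have hQ1 : ∀ a, Q i (t - k + 2) t O1 a
      = π0 ^ (k - 1) * rt (k - 1) O1 a + θ (k - 1) i + lam (k - 1) t := by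
    intro a
    have h := hQ (k - 1) t (by omega) (by omega) i O1 a
    rwa [show t - (k - 1) + 1 = t - k + 2 by omega] at h
  set S := ∑ a, pol a O1 * rt (k - 1) O1 a with hSdef
  have hsumQ : (∑ a, pol a O1 * Q i (t - k + 2) t O1 a)
      = π0 ^ (k - 1) * S + θ (k - 1) i + lam (k - 1) t := by
    have : (∑ a, pol a O1 * Q i (t - k + 2) t O1 a)
        = ∑ a, (π0 ^ (k - 1) * (pol a O1 * rt (k - 1) O1 a)
            + (θ (k - 1) i * pol a O1 + lam (k - 1) t * pol a O1)) :=
      Finset.sum_congr rfl (fun a _ => by rw [hQ1 a]; ring)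
    rw [this, Finset.sum_add_distrib, Finset.sum_add_distrib, ← Finset.mul_sum,
      ← Finset.mul_sum, ← Finset.mul_sum, hpolsum O1, ← hSdef]
    ring
  set Iu := ∫ o, (∑ a, pol a o * rt (k - 1) o a) * pu i o ∂μ with hIudef
  set Iv := ∫ o, (∑ a, pol a o * rt (k - 1) o a) * pv t o ∂μ with hIvdef
  have hθk := hθinc k (by omega) i
  have hlamk := hlaminc k (by omega) t
  have hE : (∑ a, pol a O1 * Q i (t - k + 2) t O1 a) - Q i (t - k + 1) t O2 a2
      = π0 ^ (k - 1) * S - π0 ^ k * rt k O2 a2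
        - πu * π0 ^ (k - 1) * Iu - πv * π0 ^ (k - 1) * Iv := by
    rw [hsumQ, hQ2, hθk, hlamk, ← hIudef, ← hIvdef]; ring
  have hp : (0:ℝ) ≤ π0 ^ (k - 1) := pow_nonneg h0 _
  have hA : |π0 ^ (k - 1) * S| ≤ π0 ^ (k - 1) * |c| := by
    rw [abs_mul, abs_of_nonneg hp]
    exact mul_le_mul_of_nonneg_left (hS (k - 1) O1) hp
  have hB : |π0 ^ k * rt k O2 a2| ≤ π0 ^ k * |c| := by
    rw [abs_mul, abs_of_nonneg (pow_nonneg h0 k)]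
    exact mul_le_mul_of_nonneg_left (hcabs k O2 a2) (pow_nonneg h0 k)
  have hCu : |πu * π0 ^ (k - 1) * Iu| ≤ πu * π0 ^ (k - 1) * |c| := by
    rw [abs_mul, abs_mul, abs_of_nonneg hu, abs_of_nonneg hp]
    exact mul_le_mul_of_nonneg_left (hIu (k - 1) i) (by positivity)
  have hCv : |πv * π0 ^ (k - 1) * Iv| ≤ πv * π0 ^ (k - 1) * |c| := by
    rw [abs_mul, abs_mul, abs_of_nonneg hv, abs_of_nonneg hp]
    exact mul_le_mul_of_nonneg_left (hIv (k - 1) t) (by positivity)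
  have hpowk : π0 ^ k = π0 ^ (k - 1) * π0 := by
    rw [← pow_succ]; congr 1; omega
  have hπ1 : π0 ≤ 1 := by linarith
  have hBound : |(∑ a, pol a O1 * Q i (t - k + 2) t O1 a) - Q i (t - k + 1) t O2 a2|
      ≤ (2 + πu + πv) * |c| * π0 ^ (k - 1) := by
    rw [hE]
    have hBk : π0 ^ k * |c| ≤ π0 ^ (k - 1) * |c| := by
      rw [hpowk]
      calc π0 ^ (k - 1) * π0 * |c| = π0 ^ (k - 1) * |c| * π0 := by ring
        _ ≤ π0 ^ (k - 1) * |c| :=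
            mul_le_of_le_one_right (mul_nonneg hp (abs_nonneg c)) hπ1
    calc |π0 ^ (k - 1) * S - π0 ^ k * rt k O2 a2 - πu * π0 ^ (k - 1) * Iu
            - πv * π0 ^ (k - 1) * Iv|
        ≤ |π0 ^ (k - 1) * S - π0 ^ k * rt k O2 a2 - πu * π0 ^ (k - 1) * Iu|
            + |πv * π0 ^ (k - 1) * Iv| := abs_sub _ _
      _ ≤ |π0 ^ (k - 1) * S - π0 ^ k * rt k O2 a2| + |πu * π0 ^ (k - 1) * Iu|
            + |πv * π0 ^ (k - 1) * Iv| := by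
          have := abs_sub (π0 ^ (k - 1) * S - π0 ^ k * rt k O2 a2) (πu * π0 ^ (k - 1) * Iu)
          linarith
      _ ≤ |π0 ^ (k - 1) * S| + |π0 ^ k * rt k O2 a2| + |πu * π0 ^ (k - 1) * Iu|
            + |πv * π0 ^ (k - 1) * Iv| := by
          have := abs_sub (π0 ^ (k - 1) * S) (π0 ^ k * rt k O2 a2)
          linarith
      _ ≤ π0 ^ (k - 1) * |c| + π0 ^ k * |c| + πu * π0 ^ (k - 1) * |c|
            + πv * π0 ^ (k - 1) * |c| := by linarith [hA, hB, hCu, hCv]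
      _ ≤ (2 + πu + πv) * |c| * π0 ^ (k - 1) := by nlinarith [hBk]
  refine hBound.trans ?_
  rcases eq_or_lt_of_le h0 with h0z | h0pos
  · have hz : π0 = 0 := h0z.symm
    have h1 : π0 ^ (k - 1) = 0 := by rw [hz]; exact zero_pow (by omega)
    have h2 : π0 ^ k = 0 := by rw [hz]; exact zero_pow (by omega)
    rw [h1, h2, mul_zero, mul_zero]
  · have hne : π0 ≠ 0 := ne_of_gt h0pos
    have heq : (2 + πu + πv) * |c| * π0⁻¹ * π0 ^ k
        = (2 + πu + πv) * |c| * π0 ^ (k - 1) := by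
      rw [hpowk, show (2 + πu + πv) * |c| * π0⁻¹ * (π0 ^ (k - 1) * π0)
        = (2 + πu + πv) * |c| * π0 ^ (k - 1) * (π0⁻¹ * π0) from by ring,
        inv_mul_cancel₀ hne, mul_one]
    rw [heq]
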